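/- Let e_α := (−sin α, cos α), J(x,y) = (−y,x), let p : ℝ → ℝ be a C³ function with p(α + π) = p(α) for all α, and define γ(α) := p'(α)e_α − p(α)Je_α and A := (1/2)∫₀^{2π} p(α)(p''(α) + p(α)) dα. Then ∬_{[0,π]²} [ω(γ''(α₁),γ(α₂)) + ω(γ(α₁),γ''(α₂))] · ω(γ'(α₁),γ'(α₂)) dα₁dα₂ = −A · ∫₀^π (p''(α) + p(α))² dα. -/

import Mathlib

open Real

/-- The standard area form (determinant) on `ℝ²`. -/
def omega2 (u v : ℝ × ℝ) : ℝ := u.1 * v.2 - u.2 * v.1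

/-- The unit vector forming an angle `α` with the vertical direction `(0,1)`. -/
noncomputable def eVec (α : ℝ) : ℝ × ℝ := (-Real.sin α, Real.cos α)

/-- Rotation by `π/2` in the positive direction. -/
def Jrot (v : ℝ × ℝ) : ℝ × ℝ := (-v.2, v.1)

noncomputable def XX1 (p : ℝ → ℝ) (t : ℝ) : ℝ := p t * Real.cos t - deriv p t * Real.sin t
noncomputable def XX2 (p : ℝ → ℝ) (t : ℝ) : ℝ := deriv p t * Real.cos t + p t * Real.sin t
noncomputable def YY1 (p : ℝ → ℝ) (t : ℝ) : ℝ := -((deriv (deriv p) t + p t) * Real.sin t)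
noncomputable def YY2 (p : ℝ → ℝ) (t : ℝ) : ℝ := (deriv (deriv p) t + p t) * Real.cos t
noncomputable def ZZ1 (p : ℝ → ℝ) (t : ℝ) : ℝ :=
  -((deriv (deriv (deriv p)) t + deriv p t) * Real.sin t + (deriv (deriv p) t + p t) * Real.cos t)
noncomputable def ZZ2 (p : ℝ → ℝ) (t : ℝ) : ℝ :=
  (deriv (deriv (deriv p)) t + deriv p t) * Real.cos t + (deriv (deriv p) t + p t) * -Real.sin t

lemma aux (u1 u2 v1 v2 w1 w2 : ℝ) (x1 x2 y1 y2 z1 z2 : ℝ → ℝ)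
    (hx1 : ∀ t, HasDerivAt x1 (y1 t) t) (hx2 : ∀ t, HasDerivAt x2 (y2 t) t)
    (hy1 : ∀ t, HasDerivAt y1 (z1 t) t) (hy2 : ∀ t, HasDerivAt y2 (z2 t) t)
    (hz1 : Continuous z1) (hz2 : Continuous z2)
    (bx1 : x1 π = -x1 0) (bx2 : x2 π = -x2 0) (by1 : y1 π = -y1 0) (by2 : y2 π = -y2 0) :
    (∫ t in (0:ℝ)..π,
      (2 * ((w1 * x2 t - w2 * x1 t + (u1 * z2 t - u2 * z1 t)) * (v1 * y2 t - v2 * y1 t))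
        + ((w1 * v2 - w2 * v1) * (y1 t * x2 t - y2 t * x1 t)
          + (u1 * v2 - u2 * v1) * (y1 t * z2 t - y2 t * z1 t)))) = 0 := by
  have hcy1 : Continuous y1 := continuous_iff_continuousAt.mpr fun t => (hy1 t).continuousAt
  have hcy2 : Continuous y2 := continuous_iff_continuousAt.mpr fun t => (hy2 t).continuousAt
  have hcx1 : Continuous x1 := continuous_iff_continuousAt.mpr fun t => (hx1 t).continuousAt
  have hcx2 : Continuous x2 := continuous_iff_continuousAt.mpr fun t => (hx2 t).continuousAt
  set G : ℝ → ℝ := fun t => (w1 * x2 t - w2 * x1 t) * (v1 * x2 t - v2 * x1 t)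
      + (u1 * y2 t - u2 * y1 t) * (v1 * y2 t - v2 * y1 t) with hG
  have hDG : ∀ t, HasDerivAt G
      (2 * ((w1 * x2 t - w2 * x1 t + (u1 * z2 t - u2 * z1 t)) * (v1 * y2 t - v2 * y1 t))
        + ((w1 * v2 - w2 * v1) * (y1 t * x2 t - y2 t * x1 t)
          + (u1 * v2 - u2 * v1) * (y1 t * z2 t - y2 t * z1 t))) t := by
    intro t
    have h := ((((hx2 t).const_mul w1).sub ((hx1 t).const_mul w2)).mul
        (((hx2 t).const_mul v1).sub ((hx1 t).const_mul v2))).add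
      ((((hy2 t).const_mul u1).sub ((hy1 t).const_mul u2)).mul
        (((hy2 t).const_mul v1).sub ((hy1 t).const_mul v2)))
    refine h.congr_deriv ?_
    simp only [Pi.sub_apply]
    ring
  have hInt : IntervalIntegrable (fun t =>
      (2 * ((w1 * x2 t - w2 * x1 t + (u1 * z2 t - u2 * z1 t)) * (v1 * y2 t - v2 * y1 t))
        + ((w1 * v2 - w2 * v1) * (y1 t * x2 t - y2 t * x1 t)
          + (u1 * v2 - u2 * v1) * (y1 t * z2 t - y2 t * z1 t)))) MeasureTheory.volume 0 π := by
    apply Continuous.intervalIntegrable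
    fun_prop
  rw [intervalIntegral.integral_eq_sub_of_hasDerivAt (fun t _ => hDG t) hInt]
  have : G π = G 0 := by rw [hG]; simp only [bx1, bx2, by1, by2]; ring
  rw [this, sub_self]

lemma hXX1 (p : ℝ → ℝ) (hd0 : Differentiable ℝ p) (hd1 : Differentiable ℝ (deriv p)) : ∀ t, HasDerivAt (XX1 p) (YY1 p t) t := by
  intro t
  have h := ((hd0 t).hasDerivAt.mul (Real.hasDerivAt_cos t)).sub
    ((hd1 t).hasDerivAt.mul (Real.hasDerivAt_sin t))
  have e : YY1 p t = (deriv p t * Real.cos t + p t * -Real.sin t)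
      - (deriv (deriv p) t * Real.sin t + deriv p t * Real.cos t) := by unfold YY1; ring
  rw [e]; exact h

lemma hXX2 (p : ℝ → ℝ) (hd0 : Differentiable ℝ p) (hd1 : Differentiable ℝ (deriv p)) : ∀ t, HasDerivAt (XX2 p) (YY2 p t) t := by
  intro t
  have h := ((hd1 t).hasDerivAt.mul (Real.hasDerivAt_cos t)).add
    ((hd0 t).hasDerivAt.mul (Real.hasDerivAt_sin t))
  have e : YY2 p t = (deriv (deriv p) t * Real.cos t + deriv p t * -Real.sin t)
      + (deriv p t * Real.sin t + p t * Real.cos t) := by unfold YY2; ring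
  rw [e]; exact h

lemma hYY1 (p : ℝ → ℝ) (hd0 : Differentiable ℝ p) (hd2 : Differentiable ℝ (deriv (deriv p))) : ∀ t, HasDerivAt (YY1 p) (ZZ1 p t) t := by
  intro t
  exact (((hd2 t).hasDerivAt.add (hd0 t).hasDerivAt).mul (Real.hasDerivAt_sin t)).neg

lemma hYY2 (p : ℝ → ℝ) (hd0 : Differentiable ℝ p) (hd2 : Differentiable ℝ (deriv (deriv p))) : ∀ t, HasDerivAt (YY2 p) (ZZ2 p t) t := by
  intro t
  exact ((hd2 t).hasDerivAt.add (hd0 t).hasDerivAt).mul (Real.hasDerivAt_cos t)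

lemma hcZZ1 (p : ℝ → ℝ) (hd0 : Differentiable ℝ p) (hd1 : Differentiable ℝ (deriv p)) (hd2 : Differentiable ℝ (deriv (deriv p))) (hc3 : Continuous (deriv (deriv (deriv p)))) : Continuous (ZZ1 p) :=
  (((hc3.add hd1.continuous).mul Real.continuous_sin).add
    ((hd2.continuous.add hd0.continuous).mul Real.continuous_cos)).neg

lemma hcZZ2 (p : ℝ → ℝ) (hd0 : Differentiable ℝ p) (hd1 : Differentiable ℝ (deriv p)) (hd2 : Differentiable ℝ (deriv (deriv p))) (hc3 : Continuous (deriv (deriv (deriv p)))) : Continuous (ZZ2 p) :=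
  ((hc3.add hd1.continuous).mul Real.continuous_cos).add
    ((hd2.continuous.add hd0.continuous).mul Real.continuous_sin.neg)

example : True := trivial
lemma innerInt (p : ℝ → ℝ) (hd0 : Differentiable ℝ p) (hd1 : Differentiable ℝ (deriv p))
    (hd2 : Differentiable ℝ (deriv (deriv p))) (hc3 : Continuous (deriv (deriv (deriv p))))
    (hpπ : p π = p 0) (hp1π : deriv p π = deriv p 0) (hp2π : deriv (deriv p) π = deriv (deriv p) 0)
    (a : ℝ) :
    (∫ t in (0:ℝ)..π,
        (ZZ1 p a * XX2 p t - ZZ2 p a * XX1 p t + (XX1 p a * ZZ2 p t - XX2 p a * ZZ1 p t)) *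
          (YY1 p a * YY2 p t - YY2 p a * YY1 p t))
      = -(1/2) * ((deriv (deriv p) a + p a)^2 * (∫ t in (0:ℝ)..π, p t * (deriv (deriv p) t + p t))
          + p a * (deriv (deriv p) a + p a) * (∫ t in (0:ℝ)..π, (deriv (deriv p) t + p t)^2)) := by
  have hcX1 : Continuous (XX1 p) := by
    have := hXX1 p hd0 hd1
    exact continuous_iff_continuousAt.mpr fun t => (this t).continuousAt
  have hcX2 : Continuous (XX2 p) := by
    have := hXX2 p hd0 hd1
    exact continuous_iff_continuousAt.mpr fun t => (this t).continuousAt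
  have hcY1 : Continuous (YY1 p) := by
    have := hYY1 p hd0 hd2
    exact continuous_iff_continuousAt.mpr fun t => (this t).continuousAt
  have hcY2 : Continuous (YY2 p) := by
    have := hYY2 p hd0 hd2
    exact continuous_iff_continuousAt.mpr fun t => (this t).continuousAt
  have hcZ1 := hcZZ1 p hd0 hd1 hd2 hc3
  have hcZ2 := hcZZ2 p hd0 hd1 hd2 hc3
  have bX1 : XX1 p π = -XX1 p 0 := by simp [XX1, hpπ, hp1π]
  have bX2 : XX2 p π = -XX2 p 0 := by simp [XX2, hpπ, hp1π]
  have bY1 : YY1 p π = -YY1 p 0 := by simp [YY1, hp2π, hpπ]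
  have bY2 : YY2 p π = -YY2 p 0 := by simp [YY2, hp2π, hpπ]
  have haux := aux (XX1 p a) (XX2 p a) (YY1 p a) (YY2 p a) (ZZ1 p a) (ZZ2 p a)
    (XX1 p) (XX2 p) (YY1 p) (YY2 p) (ZZ1 p) (ZZ2 p)
    (hXX1 p hd0 hd1) (hXX2 p hd0 hd1) (hYY1 p hd0 hd2) (hYY2 p hd0 hd2)
    hcZ1 hcZ2 bX1 bX2 bY1 bY2
  have hiF : IntervalIntegrable (fun t =>
      2 * ((ZZ1 p a * XX2 p t - ZZ2 p a * XX1 p t + (XX1 p a * ZZ2 p t - XX2 p a * ZZ1 p t)) *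
        (YY1 p a * YY2 p t - YY2 p a * YY1 p t))) MeasureTheory.volume 0 π := by
    apply Continuous.intervalIntegrable; fun_prop
  have hiS1 : IntervalIntegrable (fun t =>
      (ZZ1 p a * YY2 p a - ZZ2 p a * YY1 p a) * (YY1 p t * XX2 p t - YY2 p t * XX1 p t))
      MeasureTheory.volume 0 π := by
    apply Continuous.intervalIntegrable; fun_prop
  have hiS2 : IntervalIntegrable (fun t =>
      (XX1 p a * YY2 p a - XX2 p a * YY1 p a) * (YY1 p t * ZZ2 p t - YY2 p t * ZZ1 p t))
      MeasureTheory.volume 0 π := by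
    apply Continuous.intervalIntegrable; fun_prop
  rw [intervalIntegral.integral_add hiF (hiS1.add hiS2), intervalIntegral.integral_add hiS1 hiS2,
    intervalIntegral.integral_const_mul, intervalIntegral.integral_const_mul,
    intervalIntegral.integral_const_mul] at haux
  have hIyx : (∫ t in (0:ℝ)..π, (YY1 p t * XX2 p t - YY2 p t * XX1 p t))
      = -(∫ t in (0:ℝ)..π, p t * (deriv (deriv p) t + p t)) := by
    rw [← intervalIntegral.integral_neg]
    apply intervalIntegral.integral_congr
    intro t _
    simp only [XX1, XX2, YY1, YY2]
    linear_combination (-(p t * (deriv (deriv p) t + p t))) * (Real.sin_sq_add_cos_sq t)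
  have hIyz : (∫ t in (0:ℝ)..π, (YY1 p t * ZZ2 p t - YY2 p t * ZZ1 p t))
      = (∫ t in (0:ℝ)..π, (deriv (deriv p) t + p t)^2) := by
    apply intervalIntegral.integral_congr
    intro t _
    simp only [YY1, YY2, ZZ1, ZZ2]
    linear_combination ((deriv (deriv p) t + p t)^2) * (Real.sin_sq_add_cos_sq t)
  have hCa : ZZ1 p a * YY2 p a - ZZ2 p a * YY1 p a = -((deriv (deriv p) a + p a)^2) := by
    simp only [YY1, YY2, ZZ1, ZZ2]
    linear_combination (-((deriv (deriv p) a + p a)^2)) * (Real.sin_sq_add_cos_sq a)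
  have hDa : XX1 p a * YY2 p a - XX2 p a * YY1 p a = p a * (deriv (deriv p) a + p a) := by
    simp only [XX1, XX2, YY1, YY2]
    linear_combination (p a * (deriv (deriv p) a + p a)) * (Real.sin_sq_add_cos_sq a)
  rw [hIyx, hIyz, hCa, hDa] at haux
  linarith [haux]
theorem stmt_10 (p : ℝ → ℝ) (hp : ContDiff ℝ 3 p)
    (hper : ∀ α : ℝ, p (α + π) = p α)
    (γ : ℝ → ℝ × ℝ)
    (hγ : ∀ α : ℝ, γ α = deriv p α • eVec α - p α • Jrot (eVec α))
    (A : ℝ)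
    (hA : A = (1 / 2) * ∫ α in (0:ℝ)..(2 * π), p α * (deriv (deriv p) α + p α)) :
    (∫ α₁ in (0:ℝ)..π, ∫ α₂ in (0:ℝ)..π,
        (omega2 (deriv (deriv γ) α₁) (γ α₂) + omega2 (γ α₁) (deriv (deriv γ) α₂)) *
          omega2 (deriv γ α₁) (deriv γ α₂)) =
      -A * ∫ α in (0:ℝ)..π, (deriv (deriv p) α + p α) ^ 2 := by
  -- regularity
  rw [show (3 : WithTop ℕ∞) = 2 + 1 from rfl, contDiff_succ_iff_deriv] at hp
  have h2 := hp.2.2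
  rw [show (2 : WithTop ℕ∞) = 1 + 1 from rfl, contDiff_succ_iff_deriv] at h2
  have h1 := h2.2.2
  rw [contDiff_one_iff_deriv] at h1
  have hd0 : Differentiable ℝ p := hp.1
  have hd1 : Differentiable ℝ (deriv p) := h2.1
  have hd2 : Differentiable ℝ (deriv (deriv p)) := h1.1
  have hc3 : Continuous (deriv (deriv (deriv p))) := h1.2
  -- periodicity of derivatives
  have hper1 : ∀ α : ℝ, deriv p (α + π) = deriv p α := by
    intro α; rw [← deriv_comp_add_const p π α, funext hper]
  have hper2 : ∀ α : ℝ, deriv (deriv p) (α + π) = deriv (deriv p) α := by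
    intro α; rw [← deriv_comp_add_const (deriv p) π α, funext hper1]
  have hpπ : p π = p 0 := by have := hper 0; rwa [zero_add] at this
  have hp1π : deriv p π = deriv p 0 := by have := hper1 0; rwa [zero_add] at this
  have hp2π : deriv (deriv p) π = deriv (deriv p) 0 := by have := hper2 0; rwa [zero_add] at this
  -- component form of γ and its derivatives
  have e1 : ∀ t, γ t = (XX1 p t, XX2 p t) := by
    intro t
    rw [hγ t]
    simp only [eVec, Jrot, Prod.smul_mk, smul_eq_mul, Prod.mk_sub_mk, XX1, XX2, Prod.mk.injEq]
    constructor <;> ring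
  have hγfun : γ = fun t => (XX1 p t, XX2 p t) := funext e1
  have e2 : ∀ t, deriv γ t = (YY1 p t, YY2 p t) := by
    intro t
    rw [hγfun]
    exact (HasDerivAt.prodMk (hXX1 p hd0 hd1 t) (hXX2 p hd0 hd1 t)).deriv
  have e3 : ∀ t, deriv (deriv γ) t = (ZZ1 p t, ZZ2 p t) := by
    intro t
    rw [funext e2]
    exact (HasDerivAt.prodMk (hYY1 p hd0 hd2 t) (hYY2 p hd0 hd2 t)).deriv
  simp only [e1, e2, e3, omega2]
  -- inner integral
  rw [intervalIntegral.integral_congr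
    (g := fun a => -(1/2) * ((deriv (deriv p) a + p a)^2 *
        (∫ t in (0:ℝ)..π, p t * (deriv (deriv p) t + p t))
      + p a * (deriv (deriv p) a + p a) * (∫ t in (0:ℝ)..π, (deriv (deriv p) t + p t)^2)))
    (fun a _ => innerInt p hd0 hd1 hd2 hc3 hpπ hp1π hp2π a)]
  -- outer integral
  have hq2 : IntervalIntegrable (fun a => (deriv (deriv p) a + p a)^2 *
      (∫ t in (0:ℝ)..π, p t * (deriv (deriv p) t + p t))) MeasureTheory.volume 0 π := by
    apply Continuous.intervalIntegrable
    exact (((hd2.continuous.add hd0.continuous).pow 2).mul continuous_const)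
  have hpq : IntervalIntegrable (fun a => p a * (deriv (deriv p) a + p a) *
      (∫ t in (0:ℝ)..π, (deriv (deriv p) t + p t)^2)) MeasureTheory.volume 0 π := by
    apply Continuous.intervalIntegrable
    exact ((hd0.continuous.mul (hd2.continuous.add hd0.continuous)).mul continuous_const)
  rw [intervalIntegral.integral_const_mul, intervalIntegral.integral_add hq2 hpq,
    intervalIntegral.integral_mul_const, intervalIntegral.integral_mul_const]
  -- value of A
  have hfint : ∀ a b : ℝ, IntervalIntegrable (fun t => p t * (deriv (deriv p) t + p t))
      MeasureTheory.volume a b := by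
    intro a b
    exact (hd0.continuous.mul (hd2.continuous.add hd0.continuous)).intervalIntegrable a b
  have hperpq : Function.Periodic (fun t => p t * (deriv (deriv p) t + p t)) π := by
    intro t; simp only [hper t, hper2 t]
  have hsplit : (∫ t in (0:ℝ)..(2*π), p t * (deriv (deriv p) t + p t))
      = (∫ t in (0:ℝ)..π, p t * (deriv (deriv p) t + p t))
        + ∫ t in (π:ℝ)..(2*π), p t * (deriv (deriv p) t + p t) :=
    (intervalIntegral.integral_add_adjacent_intervals (hfint 0 π) (hfint π (2*π))).symm
  have hback : (∫ t in (π:ℝ)..(2*π), p t * (deriv (deriv p) t + p t))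
      = ∫ t in (0:ℝ)..π, p t * (deriv (deriv p) t + p t) := by
    have := hperpq.intervalIntegral_add_eq π 0
    simpa [two_mul] using this
  rw [hA, hsplit, hback]
  ring
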